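/- Let g : ℝ^d → ℝ be μ-strongly convex with μ ≥ 0, λ > 0, x̂ ∈ ℝ^d, and let x̄ satisfy g(x̄) + (λ/2)‖x̄ − x̂‖² ≤ min_x {g(x) + (λ/2)‖x − x̂‖²} + ε. Then for every x ∈ ℝ^d: g(x̄) − g(x) ≤ (λ/2)[‖x − x̂‖² − ‖x − x̄‖² − ‖x̂ − x̄‖²] − (μ/2)‖x − x̄‖² + √((λ+μ)ε/2)·‖x̄ − x‖² + √((λ+μ)ε/2) + ε. -/

import Mathlib

set_option maxHeartbeats 1000000 in
/-- Deterministic version of the auxiliary lemma (Lemma A.1): an ε-approximate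
proximal point `x̄` of a μ-strongly convex `g` satisfies a perturbed three-point
descent inequality. -/
theorem approx_prox_three_point (d : ℕ) (g : EuclideanSpace ℝ (Fin d) → ℝ)
    (μ : ℝ) (hμ : 0 ≤ μ)
    (hg : ConvexOn ℝ Set.univ (fun x => g x - μ / 2 * ‖x‖ ^ 2))
    (lam : ℝ) (hlam : 0 < lam) (xhat xbar : EuclideanSpace ℝ (Fin d))
    (ε : ℝ) (hε : 0 ≤ ε)
    (hbar : ∀ x, g xbar + lam / 2 * ‖xbar - xhat‖ ^ 2 ≤
      g x + lam / 2 * ‖x - xhat‖ ^ 2 + ε) :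
    ∀ x, g xbar - g x ≤
      lam / 2 * (‖x - xhat‖ ^ 2 - ‖x - xbar‖ ^ 2 - ‖xhat - xbar‖ ^ 2)
        - μ / 2 * ‖x - xbar‖ ^ 2
        + Real.sqrt ((lam + μ) * ε / 2) * ‖xbar - x‖ ^ 2
        + Real.sqrt ((lam + μ) * ε / 2) + ε := by
  intro x
  have hc : (0:ℝ) < (lam + μ) / 2 := by linarith
  -- convexity of F - c‖·‖² where F y = g y + lam/2 ‖y - xhat‖²
  have haff : ConvexOn ℝ (Set.univ : Set (EuclideanSpace ℝ (Fin d)))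
      (fun y => lam / 2 * ‖xhat‖ ^ 2 - lam * (inner ℝ y xhat : ℝ)) := by
    refine ⟨convex_univ, fun p _ q _ a b ha hb hab => ?_⟩
    simp only [inner_add_left, real_inner_smul_left, smul_eq_mul]
    obtain rfl : b = 1 - a := by linarith
    apply le_of_eq; ring
  have hconv : ConvexOn ℝ (Set.univ : Set (EuclideanSpace ℝ (Fin d)))
      (fun y => (g y + lam / 2 * ‖y - xhat‖ ^ 2) - (lam + μ) / 2 * ‖y‖ ^ 2) := by
    have h := hg.add haff
    convert h using 1
    case e'_10 => rfl
    funext y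
    have hns : ‖y - xhat‖ ^ 2 = ‖y‖ ^ 2 - 2 * (inner ℝ y xhat : ℝ) + ‖xhat‖ ^ 2 :=
      norm_sub_sq_real y xhat
    simp only [Pi.add_apply]
    rw [hns]; ring
  have hsc : StrongConvexOn (Set.univ : Set (EuclideanSpace ℝ (Fin d))) (lam + μ)
      (fun y => g y + lam / 2 * ‖y - xhat‖ ^ 2) :=
    strongConvexOn_iff_convex.mpr hconv
  have hrev1 : ‖xhat - xbar‖ = ‖xbar - xhat‖ := norm_sub_rev _ _
  have hrev2 : ‖xbar - x‖ = ‖x - xbar‖ := norm_sub_rev _ _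
  -- key inequality for every step size t ∈ (0,1]
  have hkey : ∀ t : ℝ, 0 < t → t ≤ 1 →
      g xbar - g x ≤
        lam / 2 * (‖x - xhat‖ ^ 2 - ‖x - xbar‖ ^ 2 - ‖xhat - xbar‖ ^ 2)
          - μ / 2 * ‖x - xbar‖ ^ 2 + (lam + μ) / 2 * t * ‖x - xbar‖ ^ 2 + ε / t := by
    intro t ht0 ht1
    have hmix := hsc.2 (Set.mem_univ x) (Set.mem_univ xbar) ht0.le
      (by linarith : (0:ℝ) ≤ 1 - t) (by ring)
    simp only [smul_eq_mul] at hmix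
    have hb2 := hbar (t • x + (1 - t) • xbar)
    have h2 : (g xbar - g x -
        (lam / 2 * (‖x - xhat‖ ^ 2 - ‖x - xbar‖ ^ 2 - ‖xhat - xbar‖ ^ 2)
          - μ / 2 * ‖x - xbar‖ ^ 2 + (lam + μ) / 2 * t * ‖x - xbar‖ ^ 2)) * t ≤ ε := by
      rw [hrev1]
      nlinarith [hmix, hb2]
    have h3 := (le_div_iff₀ ht0).mpr h2
    linarith [h3]
  rcases eq_or_lt_of_le hε with hε0 | hε0
  · -- ε = 0
    have hs0 : Real.sqrt ((lam + μ) * ε / 2) = 0 := by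
      rw [← hε0]; simp
    rw [hs0, ← hε0]
    simp only [zero_mul, add_zero]
    refine le_of_forall_pos_le_add ?_
    intro δ hδ
    have hD1 : (0:ℝ) < ‖x - xbar‖ ^ 2 + 1 := by positivity
    set t : ℝ := min 1 (δ / ((lam + μ) / 2 * (‖x - xbar‖ ^ 2 + 1))) with htdef
    have ht0 : 0 < t := lt_min one_pos (by positivity)
    have ht1 : t ≤ 1 := min_le_left _ _
    have h := hkey t ht0 ht1
    rw [← hε0] at h
    have htb : t ≤ δ / ((lam + μ) / 2 * (‖x - xbar‖ ^ 2 + 1)) := min_le_right _ _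
    have hbound : (lam + μ) / 2 * t * ‖x - xbar‖ ^ 2 ≤ δ := by
      have h1 : (lam + μ) / 2 * t * (‖x - xbar‖ ^ 2 + 1) ≤ δ := by
        rw [le_div_iff₀ (by positivity)] at htb
        calc (lam + μ) / 2 * t * (‖x - xbar‖ ^ 2 + 1)
            = t * ((lam + μ) / 2 * (‖x - xbar‖ ^ 2 + 1)) := by ring
          _ ≤ δ := htb
      nlinarith [ht0.le, hc.le, sq_nonneg ‖x - xbar‖]
    have hz : (0:ℝ) / t = 0 := zero_div t
    rw [hz] at h
    linarith
  · -- ε > 0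
    have hsq : Real.sqrt ((lam + μ) * ε / 2)
        = Real.sqrt ((lam + μ) / 2) * Real.sqrt ε := by
      rw [← Real.sqrt_mul hc.le]
      ring_nf
    set u : ℝ := Real.sqrt ε with hudef
    set v : ℝ := Real.sqrt ((lam + μ) / 2) with hvdef
    have hu0 : 0 < u := Real.sqrt_pos.mpr hε0
    have hv0 : 0 < v := Real.sqrt_pos.mpr hc
    have hu2 : u ^ 2 = ε := Real.sq_sqrt hε
    have hv2 : v ^ 2 = (lam + μ) / 2 := Real.sq_sqrt hc.le
    rw [hsq, hrev2]
    by_cases hle : ε ≤ (lam + μ) / 2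
    · -- small ε : t = u / v
      have huv : u ≤ v := by
        rw [hudef, hvdef]; exact Real.sqrt_le_sqrt hle
      have ht0 : 0 < u / v := div_pos hu0 hv0
      have ht1 : u / v ≤ 1 := (div_le_one hv0).mpr huv
      have h := hkey (u / v) ht0 ht1
      have e1 : (lam + μ) / 2 * (u / v) = v * u := by
        rw [← hv2]; field_simp
      have e2 : ε / (u / v) = v * u := by
        rw [← hu2]; field_simp
      rw [e1, e2] at h
      nlinarith [sq_nonneg ‖x - xbar‖, mul_pos hv0 hu0]
    · -- large ε : t = 1
      push_neg at hle
      have h := hkey 1 one_pos le_rfl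
      have hcs : (lam + μ) / 2 ≤ v * u := by
        have : v ≤ u := by
          rw [hudef, hvdef]; exact Real.sqrt_le_sqrt hle.le
        nlinarith [hv0.le, hu0.le]
      have hvu0 : 0 ≤ v * u := by positivity
      rw [div_one] at h
      have hmm : (lam + μ) / 2 * ‖x - xbar‖ ^ 2 ≤ v * u * ‖x - xbar‖ ^ 2 :=
        mul_le_mul_of_nonneg_right hcs (sq_nonneg _)
      linarith [hvu0, hmm]
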